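/- With notation as above (p ≠ q, ρ = p/q, λ₁ = max(1,ρ), λ₂ = min(1,ρ), barrier parameters p₀,q₀,r₀,s₀ summing to 1 with p₀q₀s₀ > 0, N > 1, ω₀ = (λ₂^N - λ₁^N)(1-r₀) + (λ₁^{N-1}-λ₂^{N-1})(ρq₀+p₀)), the roots ξ₁, ξ₂ of q₀ξ² + (ω₀/|1-ρ|)ξ + p₀ρ^{N-1} = 0 satisfy ξ₁ > 1 > ξ₂ > 0. -/

import Mathlib

theorem quad_roots_aux (a b c : ℝ) (ha : 0 < a) (hc : 0 < c) (h1 : a + b + c < 0) :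
    ∃ ξ₁ ξ₂ : ℝ, ξ₁ > 1 ∧ 1 > ξ₂ ∧ ξ₂ > 0 ∧
      a * ξ₁ ^ 2 + b * ξ₁ + c = 0 ∧ a * ξ₂ ^ 2 + b * ξ₂ + c = 0 ∧
      ∀ ξ : ℝ, a * ξ ^ 2 + b * ξ + c = 0 → ξ = ξ₁ ∨ ξ = ξ₂ := by
  have hb : b < 0 := by linarith
  have hD : 0 < b ^ 2 - 4 * a * c := by nlinarith [sq_nonneg (a - c), sq_nonneg (a + c)]
  set s := Real.sqrt (b ^ 2 - 4 * a * c) with hs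
  have hs2 : s ^ 2 = b ^ 2 - 4 * a * c := Real.sq_sqrt hD.le
  have hspos : 0 < s := Real.sqrt_pos.mpr hD
  have ha2 : (0:ℝ) < 2 * a := by linarith
  have ha2' : (2 * a) ≠ 0 := ne_of_gt ha2
  have hgt1 : 2 * a + b < s := by
    nlinarith [mul_pos ha (show (0:ℝ) < -(a + b + c) by linarith)]
  have hgt2 : -(2 * a) - b < s := by
    nlinarith [mul_pos ha (show (0:ℝ) < -(a + b + c) by linarith)]
  have hlt : s < -b := by
    nlinarith [mul_pos ha hc]
  refine ⟨(-b + s) / (2 * a), (-b - s) / (2 * a), ?_, ?_, ?_, ?_, ?_, ?_⟩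
  · rw [gt_iff_lt, lt_div_iff₀ ha2]; linarith
  · rw [gt_iff_lt, div_lt_iff₀ ha2]; linarith
  · rw [gt_iff_lt, lt_div_iff₀ ha2]; linarith
  · field_simp
    linear_combination hs2
  · field_simp
    linear_combination hs2
  · intro ξ hξ
    have key : a * (ξ - (-b + s) / (2 * a)) * (ξ - (-b - s) / (2 * a)) = 0 := by
      have expand : a * (ξ - (-b + s) / (2 * a)) * (ξ - (-b - s) / (2 * a))
          = a * ξ ^ 2 + b * ξ + c := by
        field_simp
        linear_combination (-1) * hs2
      rw [expand, hξ]
    rcases mul_eq_zero.mp key with h | h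
    · rcases mul_eq_zero.mp h with h' | h'
      · exact absurd h' (ne_of_gt ha)
      · left; linarith
    · right; linarith

theorem stmt_15 (p q r ρ p₀ q₀ r₀ s₀ ω₀ : ℝ) (N : ℕ)
    (hp : 0 < p) (hq : 0 < q) (hne : p ≠ q) (hr : r = 1 - p - q) (hr0 : 0 ≤ r)
    (hρ : ρ = p / q)
    (hp₀ : 0 < p₀) (hq₀ : 0 < q₀) (hs₀ : 0 < s₀) (hr₀ : 0 ≤ r₀)
    (hsum : p₀ + q₀ + r₀ + s₀ = 1) (hN : 1 < N)
    (hω₀ : ω₀ = ((min 1 ρ) ^ N - (max 1 ρ) ^ N) * (1 - r₀) +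
      ((max 1 ρ) ^ (N - 1) - (min 1 ρ) ^ (N - 1)) * (ρ * q₀ + p₀)) :
    ∃ ξ₁ ξ₂ : ℝ, ξ₁ > 1 ∧ 1 > ξ₂ ∧ ξ₂ > 0 ∧
      q₀ * ξ₁ ^ 2 + (ω₀ / |1 - ρ|) * ξ₁ + p₀ * ρ ^ (N - 1) = 0 ∧
      q₀ * ξ₂ ^ 2 + (ω₀ / |1 - ρ|) * ξ₂ + p₀ * ρ ^ (N - 1) = 0 ∧
      ∀ ξ : ℝ, q₀ * ξ ^ 2 + (ω₀ / |1 - ρ|) * ξ + p₀ * ρ ^ (N - 1) = 0 → ξ = ξ₁ ∨ ξ = ξ₂ := by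
  have hρpos : 0 < ρ := hρ ▸ div_pos hp hq
  have hρne : ρ ≠ 1 := by
    rw [hρ]
    intro h
    exact hne ((div_eq_one_iff_eq (ne_of_gt hq)).mp h)
  obtain ⟨m, hm⟩ : ∃ m, N = m + 1 := ⟨N - 1, (Nat.succ_pred_eq_of_pos (by omega)).symm⟩
  have hm1 : 1 ≤ m := by omega
  have hNm : N - 1 = m := by omega
  have hcpos : 0 < p₀ * ρ ^ (N - 1) := mul_pos hp₀ (pow_pos hρpos _)
  rcases lt_or_gt_of_ne hρne with hlt | hgt
  · -- ρ < 1
    have hmax : max 1 ρ = 1 := max_eq_left hlt.le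
    have hmin : min 1 ρ = ρ := min_eq_right hlt.le
    have habs : |1 - ρ| = 1 - ρ := abs_of_pos (by linarith)
    have h1ρ : (0:ℝ) < 1 - ρ := by linarith
    have hω : ω₀ = (ρ ^ N - 1) * (1 - r₀) + (1 - ρ ^ (N - 1)) * (ρ * q₀ + p₀) := by
      rw [hω₀, hmax, hmin]; ring
    have keyeq : q₀ * (1 - ρ) + ω₀ + p₀ * ρ ^ (N - 1) * (1 - ρ) = s₀ * (ρ ^ N - 1) := by
      rw [hω, hm]
      simp only [Nat.add_sub_cancel, pow_succ]
      have : r₀ = 1 - p₀ - q₀ - s₀ := by linarith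
      rw [this]; ring
    have hpowlt : ρ ^ N < 1 := pow_lt_one₀ hρpos.le hlt (by omega)
    have hfin : q₀ + ω₀ / |1 - ρ| + p₀ * ρ ^ (N - 1) < 0 := by
      rw [habs]
      have heq : q₀ + ω₀ / (1 - ρ) + p₀ * ρ ^ (N - 1)
          = (q₀ * (1 - ρ) + ω₀ + p₀ * ρ ^ (N - 1) * (1 - ρ)) / (1 - ρ) := by
        field_simp
      rw [heq, keyeq]
      exact div_neg_of_neg_of_pos (by nlinarith) h1ρ
    exact quad_roots_aux q₀ (ω₀ / |1 - ρ|) (p₀ * ρ ^ (N - 1)) hq₀ hcpos (by linarith)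
  · -- ρ > 1
    have hmax : max 1 ρ = ρ := max_eq_right hgt.le
    have hmin : min 1 ρ = 1 := min_eq_left hgt.le
    have habs : |1 - ρ| = ρ - 1 := by rw [abs_of_neg (by linarith)]; ring
    have h1ρ : (0:ℝ) < ρ - 1 := by linarith
    have hω : ω₀ = (1 - ρ ^ N) * (1 - r₀) + (ρ ^ (N - 1) - 1) * (ρ * q₀ + p₀) := by
      rw [hω₀, hmax, hmin]; ring
    have keyeq : q₀ * (ρ - 1) + ω₀ + p₀ * ρ ^ (N - 1) * (ρ - 1) = s₀ * (1 - ρ ^ N) := by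
      rw [hω, hm]
      simp only [Nat.add_sub_cancel, pow_succ]
      have : r₀ = 1 - p₀ - q₀ - s₀ := by linarith
      rw [this]; ring
    have hpowgt : 1 < ρ ^ N := one_lt_pow₀ hgt (by omega)
    have hfin : q₀ + ω₀ / |1 - ρ| + p₀ * ρ ^ (N - 1) < 0 := by
      rw [habs]
      have heq : q₀ + ω₀ / (ρ - 1) + p₀ * ρ ^ (N - 1)
          = (q₀ * (ρ - 1) + ω₀ + p₀ * ρ ^ (N - 1) * (ρ - 1)) / (ρ - 1) := by
        field_simp
      rw [heq, keyeq]
      exact div_neg_of_neg_of_pos (by nlinarith) h1ρ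
    exact quad_roots_aux q₀ (ω₀ / |1 - ρ|) (p₀ * ρ ^ (N - 1)) hq₀ hcpos (by linarith)
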